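/- Let g be a finite directed multigraph that is connected as an undirected graph and carries a positive balanced weight c (for every vertex v, the sum of the weights of edges pointing into v equals the sum of the weights of edges pointing out of v, and every edge weight is a positive integer). Then for every vertex r of g, the weighted number of oriented spanning trees N(g, c, r) is strictly positive. -/

import Mathlib

/-- A finite directed multigraph on vertex type `V` with edge type `E`. -/
structure Multidigraph (V E : Type) where
  src : E → V
  tgt : E → V

/-- `T` is an oriented spanning tree of `G` rooted at `r`: every vertex `v ≠ r`
has in-degree 1 in `T`, the root `r` has in-degree 0 in `T`, and `T` contains
no oriented cycle. -/
def IsOrientedSpanningTree {V E : Type} [Fintype E] [DecidableEq V]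
    (G : Multidigraph V E) (r : V) (T : Finset E) : Prop :=
  (∀ v : V, v ≠ r → (T.filter (fun e => G.tgt e = v)).card = 1) ∧
  (T.filter (fun e => G.tgt e = r)).card = 0 ∧
  ¬ ∃ l : List E, l ≠ [] ∧ (∀ e ∈ l, e ∈ T) ∧
      l.Chain' (fun e f => G.tgt e = G.src f) ∧
      ∀ e₁ ∈ l.head?, ∀ e₂ ∈ l.getLast?, G.tgt e₂ = G.src e₁

open Classical in
/-- The weighted number `N(g, c, r)` of oriented spanning trees rooted at `r`,
for a natural-number weight `c`. -/
noncomputable def treeCountNat {V E : Type} [Fintype E] [DecidableEq V]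
    (G : Multidigraph V E) (c : E → ℕ) (r : V) : ℕ :=
  ∑ T : Finset E, if IsOrientedSpanningTree G r T then ∏ e ∈ T, c e else 0

/-- Undirected connectivity of the underlying undirected graph. -/
def MConnected {V E : Type} (G : Multidigraph V E) : Prop :=
  ∀ u v : V, Relation.ReflTransGen
    (fun x y => ∃ e : E, (G.src e = x ∧ G.tgt e = y) ∨ (G.src e = y ∧ G.tgt e = x)) u v

/-- A weight is balanced if at each vertex the incoming and outgoing weights agree. -/
def IsBalancedNat {V E : Type} [Fintype E] [DecidableEq V]
    (G : Multidigraph V E) (c : E → ℕ) : Prop :=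
  ∀ v : V, ∑ e ∈ Finset.univ.filter (fun e => G.tgt e = v), c e
         = ∑ e ∈ Finset.univ.filter (fun e => G.src e = v), c e


/-- Auxiliary: reachability from `r` in exactly `n` directed steps. -/
def reachN {V E : Type} (G : Multidigraph V E) (r : V) : ℕ → V → Prop
  | 0, v => v = r
  | n + 1, v => ∃ e, G.tgt e = v ∧ reachN G r n (G.src e)

/-- Along a chain whose steps strictly increase a measure, the measure of the
head is at most the measure of the last element. -/
lemma chain_head_le_getLast {E : Type} (m : E → ℕ) (step : E → E → Prop) (P : E → Prop)
    (hstep : ∀ e f, P e → P f → step e f → m e < m f) :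
    ∀ (l : List E) (a : E), (∀ e ∈ a :: l, P e) → (a :: l).Chain' step →
      m a ≤ m ((a :: l).getLast (List.cons_ne_nil a l)) := by
  intro l
  induction l with
  | nil => intro a _ _; simp
  | cons b l ih =>
    intro a hP h
    simp only [List.Chain', List.isChain_cons_cons] at h
    have h1 := hstep a b (hP a (by simp)) (hP b (by simp)) h.1
    have h2 := ih b (fun e he => hP e (by simp at he ⊢; tauto)) h.2
    rw [List.getLast_cons (List.cons_ne_nil b l)]
    exact le_trans (le_of_lt h1) h2

/-- Every vertex is reachable from `r` along directed edges. -/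
lemma reach_all {V E : Type} [Fintype V] [Fintype E] [DecidableEq V]
    (G : Multidigraph V E) (c : E → ℕ)
    (hconn : MConnected G) (hbal : IsBalancedNat G c) (hpos : ∀ e, 0 < c e)
    (r : V) : ∀ v, ∃ n, reachN G r n v := by
  classical
  set R : V → Prop := fun v => ∃ n, reachN G r n v with hR
  have hr : R r := ⟨0, rfl⟩
  have hfwd : ∀ e : E, R (G.src e) → R (G.tgt e) := by
    rintro e ⟨n, hn⟩
    exact ⟨n + 1, e, rfl, hn⟩
  set S : Finset V := Finset.univ.filter (fun v => R v) with hS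
  have hsum : ∑ e ∈ Finset.univ.filter (fun e => G.tgt e ∈ S), c e
            = ∑ e ∈ Finset.univ.filter (fun e => G.src e ∈ S), c e := by
    rw [← Finset.sum_fiberwise_eq_sum_filter, ← Finset.sum_fiberwise_eq_sum_filter]
    exact Finset.sum_congr rfl fun v _ => hbal v
  have hsub : Finset.univ.filter (fun e => G.src e ∈ S)
      ⊆ Finset.univ.filter (fun e => G.tgt e ∈ S) := by
    intro e he
    simp only [hS, Finset.mem_filter, Finset.mem_univ, true_and] at he ⊢
    exact hfwd e he
  have hbwd : ∀ e : E, R (G.tgt e) → R (G.src e) := by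
    intro e he
    by_contra hne
    have hmem : e ∈ Finset.univ.filter (fun e => G.tgt e ∈ S) := by
      simp only [hS, Finset.mem_filter, Finset.mem_univ, true_and]; exact he
    have hnmem : e ∉ Finset.univ.filter (fun e => G.src e ∈ S) := by
      simp only [hS, Finset.mem_filter, Finset.mem_univ, true_and]; exact hne
    have hlt : ∑ e ∈ Finset.univ.filter (fun e => G.src e ∈ S), c e
        < ∑ e ∈ Finset.univ.filter (fun e => G.tgt e ∈ S), c e :=
      Finset.sum_lt_sum_of_subset hsub hmem hnmem (hpos e) (fun j _ _ => Nat.zero_le _)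
    omega
  intro v
  have h := hconn r v
  induction h with
  | refl => exact hr
  | tail _ hstep ih =>
    obtain ⟨e, ⟨hs, ht⟩ | ⟨hs, ht⟩⟩ := hstep
    · exact ht ▸ hfwd e (hs ▸ ih)
    · exact hs ▸ hbwd e (ht ▸ ih)

/-- If every vertex is reachable from `r`, an oriented spanning tree exists. -/
lemma exists_tree {V E : Type} [Fintype V] [Fintype E] [DecidableEq V]
    (G : Multidigraph V E) (r : V) (hreach : ∀ v, ∃ n, reachN G r n v) :
    ∃ T, IsOrientedSpanningTree G r T := by
  classical
  set d : V → ℕ := fun v => Nat.find (hreach v) with hd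
  have hdspec : ∀ v, reachN G r (d v) v := fun v => Nat.find_spec (hreach v)
  have hdmin : ∀ v n, reachN G r n v → d v ≤ n := fun v n h => Nat.find_min' (hreach v) h
  have hedge : ∀ v, v ≠ r → ∃ e, G.tgt e = v ∧ d (G.src e) < d v := by
    intro v hv
    have hd0 : d v ≠ 0 := by
      intro h0
      have := hdspec v
      rw [h0] at this
      exact hv this
    obtain ⟨m, hm⟩ := Nat.exists_eq_succ_of_ne_zero hd0
    have hspec := hdspec v
    rw [hm] at hspec
    obtain ⟨e, he, hre⟩ := hspec
    exact ⟨e, he, lt_of_le_of_lt (hdmin _ _ hre) (by omega)⟩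
  set f : {v // v ∈ Finset.univ.erase r} → E :=
    fun x => Classical.choose (hedge x.1 (Finset.ne_of_mem_erase x.2)) with hf
  have hft : ∀ x, G.tgt (f x) = x.1 ∧ d (G.src (f x)) < d x.1 :=
    fun x => Classical.choose_spec (hedge x.1 (Finset.ne_of_mem_erase x.2))
  set T : Finset E := (Finset.univ.erase r).attach.image f with hT
  have hmemT : ∀ e ∈ T, G.tgt e ≠ r ∧ d (G.src e) < d (G.tgt e) := by
    intro e he
    rw [hT, Finset.mem_image] at he
    obtain ⟨x, _, rfl⟩ := he
    have := hft x
    rw [this.1]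
    exact ⟨Finset.ne_of_mem_erase x.2, this.2⟩
  refine ⟨T, ?_, ?_, ?_⟩
  · intro v hv
    have hvmem : v ∈ Finset.univ.erase r := Finset.mem_erase.2 ⟨hv, Finset.mem_univ v⟩
    have : T.filter (fun e => G.tgt e = v) = {f ⟨v, hvmem⟩} := by
      ext e
      simp only [Finset.mem_filter, Finset.mem_singleton]
      constructor
      · rintro ⟨heT, htgt⟩
        rw [hT, Finset.mem_image] at heT
        obtain ⟨x, _, rfl⟩ := heT
        congr 1
        exact Subtype.ext (by rw [← (hft x).1, htgt])
      · rintro rfl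
        refine ⟨?_, (hft _).1⟩
        rw [hT, Finset.mem_image]
        exact ⟨⟨v, hvmem⟩, Finset.mem_attach _ _, rfl⟩
    rw [this]; simp
  · rw [Finset.card_eq_zero, Finset.filter_eq_empty_iff]
    intro e he
    exact (hmemT e he).1
  · rintro ⟨l, hne, hmem, hchain, hclose⟩
    obtain ⟨a, l', rfl⟩ := List.exists_cons_of_ne_nil hne
    have hlast := List.getLast?_eq_getLast_of_ne_nil hne
    have hcl : G.tgt ((a :: l').getLast hne) = G.src a := by
      exact hclose a rfl _ hlast
    have hle : d (G.tgt a) ≤ d (G.tgt ((a :: l').getLast (List.cons_ne_nil a l'))) := by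
      refine chain_head_le_getLast (fun e => d (G.tgt e)) _ (fun e => e ∈ T)
        ?_ l' a hmem hchain
      intro e g heT hgT hstep
      have := (hmemT g hgT).2
      rw [← hstep] at this
      exact this
    have hlt : d (G.src a) < d (G.tgt a) := (hmemT a (hmem a (by simp))).2
    rw [hcl] at hle
    omega

theorem treeCountNat_pos {V E : Type} [Fintype V] [Fintype E] [DecidableEq V]
    (G : Multidigraph V E) (c : E → ℕ)
    (hconn : MConnected G) (hbal : IsBalancedNat G c) (hpos : ∀ e, 0 < c e)
    (r : V) :
    0 < treeCountNat G c r := by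
  classical
  obtain ⟨T, hT⟩ := exists_tree G r (reach_all G c hconn hbal hpos r)
  rw [treeCountNat]
  refine Finset.sum_pos' (fun i _ => by positivity) ⟨T, Finset.mem_univ T, ?_⟩
  rw [if_pos hT]
  exact Finset.prod_pos fun e _ => hpos e
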